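/- Let X ⊆ ℝⁿ, x⋆ ∈ X, ν ≥ 0, and d : ℝⁿ × ℝⁿ → ℝ a metric. Define the augmented suboptimality loss ℓ_ASL(ĉ) = sup_{x ∈ X}(ν d(x, x⋆) − ĉᵀx) + ĉᵀx⋆. Then ℓ_ASL is convex in ĉ, nonnegative, and if ℓ_ASL(ĉ) = 0 with ν > 0, then x⋆ is the unique minimizer of x ↦ ĉᵀx over X. -/

import Mathlib

private lemma ereal_coe_distrib (t a : ℝ) (s : EReal) (ht : 0 ≤ t) (hs : s ≠ ⊥) :
    (t : EReal) * (s + (a : EReal)) = (t : EReal) * s + ((t * a : ℝ) : EReal) := by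
  induction s with
  | bot => simp at hs
  | coe r => norm_cast; ring
  | top =>
    rcases eq_or_lt_of_le ht with h0 | h0
    · simp [← h0]
    · rw [EReal.top_add_coe, EReal.mul_top_of_pos (by exact_mod_cast h0), EReal.top_add_coe]

private lemma conv_aux {ι : Type*} [Nonempty ι] (f f₁ f₂ : ι → ℝ) (a a₁ a₂ t : ℝ)
    (ht0 : 0 ≤ t) (ht1 : t ≤ 1)
    (hf : ∀ x, f x = t * f₁ x + (1 - t) * f₂ x) (ha : a = t * a₁ + (1 - t) * a₂) :
    (⨆ x, ((f x : ℝ) : EReal)) + (a : EReal) ≤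
      (t : EReal) * ((⨆ x, ((f₁ x : ℝ) : EReal)) + (a₁ : EReal)) +
        ((1 - t : ℝ) : EReal) * ((⨆ x, ((f₂ x : ℝ) : EReal)) + (a₂ : EReal)) := by
  have ht1'' : (0 : ℝ) ≤ 1 - t := sub_nonneg.mpr ht1
  have hbot1 : (⨆ x, ((f₁ x : ℝ) : EReal)) ≠ ⊥ := by
    obtain ⟨x⟩ := ‹Nonempty ι›
    exact ((EReal.bot_lt_coe (f₁ x)).trans_le (le_iSup (fun x => ((f₁ x : ℝ) : EReal)) x)).ne'
  have hbot2 : (⨆ x, ((f₂ x : ℝ) : EReal)) ≠ ⊥ := by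
    obtain ⟨x⟩ := ‹Nonempty ι›
    exact ((EReal.bot_lt_coe (f₂ x)).trans_le (le_iSup (fun x => ((f₂ x : ℝ) : EReal)) x)).ne'
  have hSle : (⨆ x, ((f x : ℝ) : EReal)) ≤
      (t : EReal) * (⨆ x, ((f₁ x : ℝ) : EReal)) +
        ((1 - t : ℝ) : EReal) * (⨆ x, ((f₂ x : ℝ) : EReal)) := by
    apply iSup_le
    intro x
    rw [hf x, EReal.coe_add, EReal.coe_mul, EReal.coe_mul]
    exact add_le_add
      (mul_le_mul_of_nonneg_left (le_iSup (fun x => ((f₁ x : ℝ) : EReal)) x)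
        (by exact_mod_cast ht0))
      (mul_le_mul_of_nonneg_left (le_iSup (fun x => ((f₂ x : ℝ) : EReal)) x)
        (by exact_mod_cast ht1''))
  rw [ereal_coe_distrib t a₁ _ ht0 hbot1, ereal_coe_distrib (1 - t) a₂ _ ht1'' hbot2,
    ha, EReal.coe_add]
  calc (⨆ x, ((f x : ℝ) : EReal)) + (((t * a₁ : ℝ) : EReal) + (((1 - t) * a₂ : ℝ) : EReal))
      ≤ ((t : EReal) * (⨆ x, ((f₁ x : ℝ) : EReal)) +
          ((1 - t : ℝ) : EReal) * (⨆ x, ((f₂ x : ℝ) : EReal))) +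
        (((t * a₁ : ℝ) : EReal) + (((1 - t) * a₂ : ℝ) : EReal)) := add_le_add hSle le_rfl
    _ = _ := add_add_add_comm _ _ _ _

/-- The augmented suboptimality loss `ℓ_ASL(ĉ) = sup_{x ∈ X}(ν d(x,x⋆) − ĉᵀx) + ĉᵀx⋆`
is convex and nonnegative, and if it vanishes with `ν > 0` then `x⋆` is the
unique minimizer of `x ↦ ĉᵀx` over `X`. -/
theorem stmt_13 (n : ℕ) (X : Set (Fin n → ℝ)) (hX : X.Nonempty)
    (hXbdd : Bornology.IsBounded X)
    (xstar : Fin n → ℝ) (hxstar : xstar ∈ X)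
    (d : (Fin n → ℝ) → (Fin n → ℝ) → ℝ)
    (hd_nonneg : ∀ x y, 0 ≤ d x y)
    (hd_eq : ∀ x y, d x y = 0 ↔ x = y)
    (hd_symm : ∀ x y, d x y = d y x)
    (hd_tri : ∀ x y z, d x z ≤ d x y + d y z)
    (ν : ℝ) (hν : 0 ≤ ν)
    (ℓ : (Fin n → ℝ) → EReal)
    (hℓ : ∀ c, ℓ c =
      (⨆ x : X, ((ν * d x xstar - ∑ i, c i * (x : Fin n → ℝ) i : ℝ) : EReal)) +
        ((∑ i, c i * xstar i : ℝ) : EReal)) :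
    (∀ c₁ c₂ : Fin n → ℝ, ∀ t : ℝ, 0 ≤ t → t ≤ 1 →
      ℓ (t • c₁ + (1 - t) • c₂) ≤ (t : EReal) * ℓ c₁ + ((1 - t : ℝ) : EReal) * ℓ c₂) ∧
    (∀ c, 0 ≤ ℓ c) ∧
    (∀ c, 0 < ν → ℓ c = 0 →
      ∀ x ∈ X, x ≠ xstar → ∑ i, c i * xstar i < ∑ i, c i * x i) := by
  haveI : Nonempty X := ⟨⟨xstar, hxstar⟩⟩
  have key : ∀ c : Fin n → ℝ, ((-(∑ i, c i * xstar i) : ℝ) : EReal) ≤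
      ⨆ x : X, ((ν * d x xstar - ∑ i, c i * (x : Fin n → ℝ) i : ℝ) : EReal) := by
    intro c
    have h := le_iSup
      (fun x : X => ((ν * d x xstar - ∑ i, c i * (x : Fin n → ℝ) i : ℝ) : EReal))
      ⟨xstar, hxstar⟩
    simpa [(hd_eq xstar xstar).mpr rfl] using h
  have hsum : ∀ (c₁ c₂ : Fin n → ℝ) (t : ℝ) (x : Fin n → ℝ),
      (∑ i, (t • c₁ + (1 - t) • c₂) i * x i)
        = t * (∑ i, c₁ i * x i) + (1 - t) * (∑ i, c₂ i * x i) := by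
    intro c₁ c₂ t x
    simp only [Pi.add_apply, Pi.smul_apply, smul_eq_mul, add_mul, Finset.sum_add_distrib,
      Finset.mul_sum, mul_assoc]
  refine ⟨?_, ?_, ?_⟩
  · intro c₁ c₂ t ht0 ht1
    rw [hℓ, hℓ c₁, hℓ c₂]
    exact conv_aux
      (fun x : X => (ν * d x xstar - ∑ i, (t • c₁ + (1 - t) • c₂) i * (x : Fin n → ℝ) i : ℝ))
      (fun x : X => (ν * d x xstar - ∑ i, c₁ i * (x : Fin n → ℝ) i : ℝ))
      (fun x : X => (ν * d x xstar - ∑ i, c₂ i * (x : Fin n → ℝ) i : ℝ))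
      _ _ _ t ht0 ht1
      (fun x => by rw [hsum]; ring)
      (by rw [hsum c₁ c₂ t xstar])
  · intro c
    rw [hℓ c]
    calc (0 : EReal) = ((-(∑ i, c i * xstar i) + ∑ i, c i * xstar i : ℝ) : EReal) := by
          norm_num
      _ = ((-(∑ i, c i * xstar i) : ℝ) : EReal) + ((∑ i, c i * xstar i : ℝ) : EReal) := by
          norm_cast
      _ ≤ _ := add_le_add (key c) le_rfl
  · intro c hν' hc0 x hx hne
    have h1 : ((ν * d x xstar - ∑ i, c i * x i : ℝ) : EReal) ≤
        ⨆ x : X, ((ν * d x xstar - ∑ i, c i * (x : Fin n → ℝ) i : ℝ) : EReal) :=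
      le_iSup (fun x : X =>
        ((ν * d x xstar - ∑ i, c i * (x : Fin n → ℝ) i : ℝ) : EReal)) ⟨x, hx⟩
    have h2 : ((ν * d x xstar - ∑ i, c i * x i : ℝ) : EReal)
        + ((∑ i, c i * xstar i : ℝ) : EReal) ≤ 0 := by
      calc ((ν * d x xstar - ∑ i, c i * x i : ℝ) : EReal) + ((∑ i, c i * xstar i : ℝ) : EReal)
          ≤ (⨆ x : X, ((ν * d x xstar - ∑ i, c i * (x : Fin n → ℝ) i : ℝ) : EReal))
            + ((∑ i, c i * xstar i : ℝ) : EReal) := add_le_add h1 le_rfl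
        _ = 0 := by rw [← hℓ c, hc0]
    rw [← EReal.coe_add] at h2
    have h3 : (ν * d x xstar - ∑ i, c i * x i) + (∑ i, c i * xstar i) ≤ 0 := by
      exact_mod_cast h2
    have hdpos : 0 < d x xstar :=
      lt_of_le_of_ne (hd_nonneg x xstar) (fun h => hne ((hd_eq x xstar).mp h.symm))
    nlinarith [mul_pos hν' hdpos]
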